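/- Let M = (m_{ij}) be a symmetric matrix with entries m_{ij} ∈ {1,2} for i ≠ j such that m_{ik} = 1 whenever m_{ij} = 1 and m_{jk} = 1. Define the equivalence relation i ∼ j on {1,…,n} by i ∼ j if and only if i = j or m_{ij} = 1, and let S_{n,P} ≤ S_n be the subgroup generated by the transpositions (i j) with i ∼ j. Let π : Br_n → S_n be the homomorphism with π(σ_i) = (i, i+1), and let PBr_n = ker π be the pure braid group. Then PBr_n ⊆ E_M and π(E_M) = S_{n,P}; in other words, there is a short exact sequence 1 → PBr_n → E_M → S_{n,P} → 1. -/

import Mathlib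

/-- Relators for the braid group `Br_n` on generators `σ_1, …, σ_{n-1}`
(indexed by natural numbers; out-of-range generators are killed). -/
def braidRels (n : ℕ) : Set (FreeGroup ℕ) :=
  {r | (∃ i, 1 ≤ i ∧ i + 2 ≤ n ∧
        r = FreeGroup.of i * FreeGroup.of (i+1) * FreeGroup.of i *
            (FreeGroup.of (i+1) * FreeGroup.of i * FreeGroup.of (i+1))⁻¹) ∨
       (∃ i j, 1 ≤ i ∧ i + 2 ≤ j ∧ j + 1 ≤ n ∧
        r = FreeGroup.of i * FreeGroup.of j * (FreeGroup.of j * FreeGroup.of i)⁻¹) ∨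
       (∃ i, (i = 0 ∨ n ≤ i) ∧ r = FreeGroup.of i)}

/-- The braid group on `n` strands. -/
abbrev BraidGroup (n : ℕ) := PresentedGroup (braidRels n)

/-- The Artin generator `σ_i` of the braid group (`1 ≤ i ≤ n-1`). -/
def braidGen (n i : ℕ) : BraidGroup n := PresentedGroup.of i

/-- The band generator `a_{ij} = (σ_{j-1} ⋯ σ_{i+1}) σ_i (σ_{j-1} ⋯ σ_{i+1})⁻¹`. -/
def band (n i j : ℕ) : BraidGroup n :=
  (((List.range (j - 1 - i)).map (fun t => braidGen n (j - 1 - t))).prod) * braidGen n i *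
  (((List.range (j - 1 - i)).map (fun t => braidGen n (j - 1 - t))).prod)⁻¹

/-- The band generator with the convention `a_{ji} = a_{ij}`. -/
def bandS (n i j : ℕ) : BraidGroup n := band n (min i j) (max i j)

/-- The subgroup `E_M ≤ Br_n` generated by the powers `a_{ij}^{m_{ij}}`. -/
def bandSubgroup (n : ℕ) (m : ℕ → ℕ → ℕ) : Subgroup (BraidGroup n) :=
  Subgroup.closure {x | ∃ i j, 1 ≤ i ∧ i < j ∧ j ≤ n ∧ x = band n i j ^ m i j}
namespace St6

variable (n : ℕ)

/-- relators are trivial in the presented group -/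
lemma mk_rel {r : FreeGroup ℕ} (h : r ∈ braidRels n) :
    PresentedGroup.mk (braidRels n) r = 1 := by
  have : r ∈ Subgroup.normalClosure (braidRels n) := Subgroup.subset_normalClosure h
  exact (QuotientGroup.eq_one_iff r).mpr this

lemma gen_out {i : ℕ} (h : i = 0 ∨ n ≤ i) : braidGen n i = 1 := by
  have := mk_rel n (r := FreeGroup.of i) (Or.inr (Or.inr ⟨i, h, rfl⟩))
  exact this

lemma braid_rel {i : ℕ} (h1 : 1 ≤ i) (h2 : i + 2 ≤ n) :
    braidGen n i * braidGen n (i+1) * braidGen n i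
      = braidGen n (i+1) * braidGen n i * braidGen n (i+1) := by
  have := mk_rel n (r := FreeGroup.of i * FreeGroup.of (i+1) * FreeGroup.of i *
      (FreeGroup.of (i+1) * FreeGroup.of i * FreeGroup.of (i+1))⁻¹)
      (Or.inl ⟨i, h1, h2, rfl⟩)
  have h' : (braidGen n i * braidGen n (i+1) * braidGen n i) *
      (braidGen n (i+1) * braidGen n i * braidGen n (i+1))⁻¹ = 1 := by
    simpa [braidGen, PresentedGroup.of, map_mul, map_inv] using this
  exact mul_inv_eq_one.mp h'

lemma comm_rel {i j : ℕ} (h1 : 1 ≤ i) (h2 : i + 2 ≤ j) (h3 : j + 1 ≤ n) :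
    Commute (braidGen n i) (braidGen n j) := by
  have := mk_rel n (r := FreeGroup.of i * FreeGroup.of j *
      (FreeGroup.of j * FreeGroup.of i)⁻¹) (Or.inr (Or.inl ⟨i, j, h1, h2, h3, rfl⟩))
  have h' : (braidGen n i * braidGen n j) * (braidGen n j * braidGen n i)⁻¹ = 1 := by
    simpa [braidGen, PresentedGroup.of, map_mul, map_inv] using this
  exact mul_inv_eq_one.mp h'

lemma comm_all {i j : ℕ} (h : i + 2 ≤ j) :
    Commute (braidGen n i) (braidGen n j) := by
  rcases Nat.eq_zero_or_pos i with hi | hi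
  · subst hi; rw [gen_out n (Or.inl rfl)]; exact Commute.one_left _
  rcases le_or_gt (j+1) n with hj | hj
  · exact comm_rel n hi h hj
  · rw [gen_out n (i := j) (Or.inr (by omega))]; exact Commute.one_right _

end St6

namespace St6
variable (n : ℕ)

/-- descending product σ_{m-1} σ_{m-2} ⋯ σ_k -/
def DD (k m : ℕ) : BraidGroup n :=
  ((List.range (m - k)).map (fun t => braidGen n (m - 1 - t))).prod

lemma DD_self (m : ℕ) : DD n m m = 1 := by simp [DD]

lemma DD_succ {k m : ℕ} (h : k ≤ m) : DD n k (m+1) = braidGen n m * DD n k m := by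
  have hc : m + 1 - k = (m - k) + 1 := by omega
  rw [DD, hc, List.range_succ_eq_map, List.map_cons, List.map_map, List.prod_cons]
  have : braidGen n (m + 1 - 1 - 0) = braidGen n m := by norm_num
  rw [this, DD]
  congr 2
  apply List.map_congr_left
  intro t ht
  simp only [Function.comp_apply]
  congr 1
  omega

lemma DD_split {k i m : ℕ} (hk : k ≤ i) (him : i ≤ m) :
    DD n k m = DD n i m * DD n k i := by
  induction m, him using Nat.le_induction with
  | base => rw [DD_self, one_mul]
  | succ m hm ih => rw [DD_succ n (le_trans hk hm), DD_succ n hm, ih, mul_assoc]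

lemma band_eq_DD (i j : ℕ) :
    band n i j = DD n (i+1) j * braidGen n i * (DD n (i+1) j)⁻¹ := by
  have hc : j - (i+1) = j - 1 - i := by omega
  rw [band, DD, hc]

lemma band_adj (i : ℕ) : band n i (i+1) = braidGen n i := by
  rw [band_eq_DD, DD_self]; group

lemma band_succ {i j : ℕ} (h : i ≤ j) :
    band n i (j+1) = braidGen n j * band n i j * (braidGen n j)⁻¹ := by
  rcases eq_or_lt_of_le h with rfl | hlt
  · rw [band_adj]
    rw [band_eq_DD]
    have : i - (i+1) = 0 := by omega
    rw [show DD n (i+1) i = 1 from by simp [DD, this]]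
    group
  · rw [band_eq_DD, band_eq_DD, DD_succ n (by omega : i + 1 ≤ j)]
    group

lemma comm_DD_low {x k m : ℕ} (h : x + 2 ≤ k) : Commute (braidGen n x) (DD n k m) := by
  apply Commute.list_prod_right
  intro y hy
  simp only [List.mem_map, List.mem_range] at hy
  obtain ⟨t, ht, rfl⟩ := hy
  exact comm_all n (by omega)

lemma comm_DD_high {x k m : ℕ} (h : m + 1 ≤ x) : Commute (braidGen n x) (DD n k m) := by
  apply Commute.list_prod_right
  intro y hy
  simp only [List.mem_map, List.mem_range] at hy
  obtain ⟨t, ht, rfl⟩ := hy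
  exact (comm_all n (by omega)).symm

lemma comm_band_low {x i j : ℕ} (h : x + 2 ≤ i) : Commute (braidGen n x) (band n i j) := by
  rw [band_eq_DD]
  exact (((comm_DD_low n (by omega)).mul_right (comm_all n (by omega))).mul_right
    (comm_DD_low n (by omega)).inv_right)

lemma comm_band_high {x i j : ℕ} (hij : i < j) (h : j + 1 ≤ x) :
    Commute (braidGen n x) (band n i j) := by
  rw [band_eq_DD]
  exact (((comm_DD_high n (by omega)).mul_right ((comm_all n (by omega)).symm)).mul_right
    (comm_DD_high n (by omega)).inv_right)

end St6

namespace St6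
variable (n : ℕ)

lemma comm_band_mid {x i j : ℕ} (hi : 1 ≤ i) (hix : i < x) (hxj : x + 2 ≤ j) (hjn : j ≤ n) :
    Commute (braidGen n x) (band n i j) := by
  induction j, hxj using Nat.le_induction with
  | base =>
    have hb1 : band n i (x+2) = braidGen n (x+1) * band n i (x+1) * (braidGen n (x+1))⁻¹ :=
      band_succ n (by omega)
    have hb2 : band n i (x+1) = braidGen n x * band n i x * (braidGen n x)⁻¹ :=
      band_succ n (by omega)
    have hbc : Commute (braidGen n (x+1)) (band n i x) :=
      comm_band_high n (by omega) (by omega)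
    have hbr := braid_rel n (by omega : 1 ≤ x) (by omega : x + 2 ≤ n)
    rw [Commute, SemiconjBy, hb1, hb2]
    set a := braidGen n x
    set b := braidGen n (x+1)
    set c := band n i x
    calc a * (b * (a * c * a⁻¹) * b⁻¹)
        = (a * b * a) * c * (a * b * a)⁻¹ * a := by group
      _ = (b * a * b) * c * (b * a * b)⁻¹ * a := by rw [hbr]
      _ = b * a * (b * c * b⁻¹) * (b * a)⁻¹ * a := by group
      _ = b * a * (c) * (b * a)⁻¹ * a := by rw [hbc.eq]; group
      _ = b * (a * c * a⁻¹) * b⁻¹ * a := by group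
  | succ j hj ih =>
    rw [band_succ n (by omega : i ≤ j)]
    exact (((comm_all n (i := x) (j := j) (by omega)).mul_right (ih (by omega))).mul_right
      (comm_all n (i := x) (j := j) (by omega)).inv_right)

lemma conjC {i j : ℕ} (hi : 1 ≤ i) (hij : i + 2 ≤ j) (hjn : j ≤ n) :
    braidGen n i * band n i j * (braidGen n i)⁻¹ = band n (i+1) j := by
  induction j, hij using Nat.le_induction with
  | base =>
    rw [band_succ n (by omega : i ≤ i+1), band_adj, band_adj]
    have hbr := braid_rel n hi (by omega)
    calc braidGen n i * (braidGen n (i+1) * braidGen n i * (braidGen n (i+1))⁻¹) *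
          (braidGen n i)⁻¹
        = (braidGen n i * braidGen n (i+1) * braidGen n i) *
            (braidGen n i * braidGen n (i+1))⁻¹ := by group
      _ = (braidGen n (i+1) * braidGen n i * braidGen n (i+1)) *
            (braidGen n i * braidGen n (i+1))⁻¹ := by rw [hbr]
      _ = braidGen n (i+1) := by group
  | succ j hj ih =>
    rw [band_succ n (by omega : i ≤ j), band_succ n (by omega : i + 1 ≤ j)]
    have hc := comm_all n (i := i) (j := j) (by omega)
    rw [← ih (by omega)]
    calc braidGen n i * (braidGen n j * band n i j * (braidGen n j)⁻¹) * (braidGen n i)⁻¹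
        = (braidGen n i * braidGen n j) * band n i j *
            ((braidGen n i * braidGen n j))⁻¹ := by group
      _ = (braidGen n j * braidGen n i) * band n i j *
            ((braidGen n j * braidGen n i))⁻¹ := by rw [hc.eq]
      _ = braidGen n j * (braidGen n i * band n i j * (braidGen n i)⁻¹) *
            (braidGen n j)⁻¹ := by group

lemma DD_one (k : ℕ) : DD n k (k+1) = braidGen n k := by
  rw [DD_succ n (le_refl k), DD_self, mul_one]

lemma DD_pop {k m : ℕ} (h : k < m) : DD n k m = DD n (k+1) m * braidGen n k := by
  rw [DD_split n (by omega : k ≤ k+1) (by omega : k + 1 ≤ m), DD_one]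

lemma Djuggle {k i m : ℕ} (hk : 1 ≤ k) (hki : k ≤ i) (him : i + 1 < m) (hmn : m ≤ n) :
    DD n k m * braidGen n (i+1) = braidGen n i * DD n k m := by
  have hbr := braid_rel n (by omega : 1 ≤ i) (by omega : i + 2 ≤ n)
  have hDcomm : Commute (braidGen n (i+1)) (DD n k i) := comm_DD_high n (by omega)
  rcases eq_or_lt_of_le (show i + 1 + 1 ≤ m from him) with hm2 | hm3
  · -- m = i+2
    have hsplit : DD n k m = braidGen n (i+1) * (braidGen n i * DD n k i) := by
      rw [← hm2, DD_succ n (by omega), DD_succ n (by omega)]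
    rw [hsplit]
    calc braidGen n (i+1) * (braidGen n i * DD n k i) * braidGen n (i+1)
        = braidGen n (i+1) * braidGen n i * (DD n k i * braidGen n (i+1)) := by group
      _ = braidGen n (i+1) * braidGen n i * (braidGen n (i+1) * DD n k i) := by
            rw [hDcomm.eq]
      _ = (braidGen n (i+1) * braidGen n i * braidGen n (i+1)) * DD n k i := by group
      _ = (braidGen n i * braidGen n (i+1) * braidGen n i) * DD n k i := by rw [← hbr]
      _ = braidGen n i * (braidGen n (i+1) * (braidGen n i * DD n k i)) := by group
  · -- i + 2 < m
    have hsplit : DD n k m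
        = DD n (i+3) m * (braidGen n (i+2) * (braidGen n (i+1) * (braidGen n i * DD n k i))) := by
      rw [DD_split n (by omega : k ≤ i + 3) (by omega : i + 3 ≤ m),
        show i + 3 = (i+2) + 1 from rfl, DD_succ n (by omega), DD_succ n (by omega),
        DD_succ n (by omega)]
    have hc2 : Commute (braidGen n i) (braidGen n (i+2)) := comm_all n (by omega)
    have hcD : Commute (braidGen n i) (DD n (i+3) m) := comm_DD_low n (by omega)
    rw [hsplit]
    calc DD n (i+3) m * (braidGen n (i+2) * (braidGen n (i+1) * (braidGen n i * DD n k i))) *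
          braidGen n (i+1)
        = DD n (i+3) m * braidGen n (i+2) * (braidGen n (i+1) * braidGen n i) *
            (DD n k i * braidGen n (i+1)) := by group
      _ = DD n (i+3) m * braidGen n (i+2) * (braidGen n (i+1) * braidGen n i) *
            (braidGen n (i+1) * DD n k i) := by rw [hDcomm.eq]
      _ = DD n (i+3) m * braidGen n (i+2) * (braidGen n (i+1) * braidGen n i * braidGen n (i+1)) *
            DD n k i := by group
      _ = DD n (i+3) m * braidGen n (i+2) * (braidGen n i * braidGen n (i+1) * braidGen n i) *
            DD n k i := by rw [← hbr]
      _ = DD n (i+3) m * (braidGen n (i+2) * braidGen n i) *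
            (braidGen n (i+1) * (braidGen n i * DD n k i)) := by group
      _ = DD n (i+3) m * (braidGen n i * braidGen n (i+2)) *
            (braidGen n (i+1) * (braidGen n i * DD n k i)) := by rw [hc2.eq]
      _ = (DD n (i+3) m * braidGen n i) * (braidGen n (i+2) *
            (braidGen n (i+1) * (braidGen n i * DD n k i))) := by group
      _ = (braidGen n i * DD n (i+3) m) * (braidGen n (i+2) *
            (braidGen n (i+1) * (braidGen n i * DD n k i))) := by rw [hcD.eq]
      _ = braidGen n i * (DD n (i+3) m * (braidGen n (i+2) *
            (braidGen n (i+1) * (braidGen n i * DD n k i)))) := by group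

end St6

namespace St6
variable (n : ℕ)

/-- The subgroup generated by the squares of the band generators (the pure braid group). -/
def Psq : Subgroup (BraidGroup n) :=
  Subgroup.closure {x | ∃ i j, 1 ≤ i ∧ i < j ∧ j ≤ n ∧ x = band n i j ^ 2}

lemma band_sq_mem {i j : ℕ} (hi : 1 ≤ i) (hij : i < j) (hjn : j ≤ n) :
    band n i j ^ 2 ∈ Psq n :=
  Subgroup.subset_closure ⟨i, j, hi, hij, hjn, rfl⟩

lemma gen_sq_mem {k : ℕ} (hk : 1 ≤ k) (hk2 : k + 1 ≤ n) :
    braidGen n k ^ 2 ∈ Psq n := by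
  rw [← band_adj n k]; exact band_sq_mem n hk (by omega) hk2

lemma conj_mem_of_eq {g u b a : BraidGroup n} (hc : g * a * g⁻¹ = u * b * u⁻¹)
    (hu : u ∈ Psq n) (hb : b ^ 2 ∈ Psq n) : g * a ^ 2 * g⁻¹ ∈ Psq n := by
  have heq : g * a ^ 2 * g⁻¹ = u * b ^ 2 * u⁻¹ := by
    rw [pow_two, pow_two]
    calc g * (a * a) * g⁻¹ = (g * a * g⁻¹) * (g * a * g⁻¹) := by group
      _ = (u * b * u⁻¹) * (u * b * u⁻¹) := by rw [hc]
      _ = u * (b * b) * u⁻¹ := by group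
  rw [heq]
  exact mul_mem (mul_mem hu hb) (inv_mem hu)

lemma conj_mem_of_comm {g a : BraidGroup n} (hc : Commute g a) (hb : a ^ 2 ∈ Psq n) :
    g * a ^ 2 * g⁻¹ ∈ Psq n := by
  have heq : g * a ^ 2 * g⁻¹ = a ^ 2 := by
    rw [(hc.pow_right 2).eq]; group
  rw [heq]; exact hb

lemma conj_band_sq {x i j : ℕ} (hx1 : 1 ≤ x) (hx2 : x + 1 ≤ n) (hi : 1 ≤ i) (hij : i < j)
    (hjn : j ≤ n) :
    braidGen n x * band n i j ^ 2 * (braidGen n x)⁻¹ ∈ Psq n ∧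
    (braidGen n x)⁻¹ * band n i j ^ 2 * braidGen n x ∈ Psq n := by
  rcases lt_trichotomy (x+1) i with hA | hB | hC
  · -- x + 2 ≤ i : commute
    have hc : Commute (braidGen n x) (band n i j) := comm_band_low n (by omega)
    exact ⟨conj_mem_of_comm n hc (band_sq_mem n hi hij hjn),
      conj_mem_of_comm n hc.inv_left (band_sq_mem n hi hij hjn)⟩
  · -- x + 1 = i
    have hcC := conjC n (i := x) (by omega) (by omega) hjn
    rw [show x + 1 = i from hB] at hcC
    constructor
    · refine conj_mem_of_eq n (u := braidGen n x ^ 2) (b := band n x j) ?_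
        (gen_sq_mem n hx1 hx2) (band_sq_mem n hx1 (by omega) hjn)
      rw [← hcC]; (try rw [pow_two]); group
    · refine conj_mem_of_eq n (u := 1) (b := band n x j) ?_ (one_mem _)
        (band_sq_mem n hx1 (by omega) hjn)
      rw [← hcC]; (try rw [pow_two]); group
  · -- i ≤ x
    have hCi : i ≤ x := by omega
    rcases eq_or_lt_of_le hCi with rfl | hilt
    · -- x = i
      rcases eq_or_lt_of_le (show i + 1 ≤ j by omega) with rfl | hj2
      · -- j = i + 1 : band = σ_i, commutes with itself
        have hc : Commute (braidGen n i) (band n i (i+1)) := by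
          rw [band_adj]
        exact ⟨conj_mem_of_comm n hc (band_sq_mem n hi hij hjn),
          conj_mem_of_comm n hc.inv_left (band_sq_mem n hi hij hjn)⟩
      · -- j > i + 1
        have hcC := conjC n (i := i) hi (by omega) hjn
        constructor
        · exact conj_mem_of_eq n (u := 1) (b := band n (i+1) j)
            (by rw [hcC]; (try rw [pow_two]); group) (one_mem _) (band_sq_mem n (by omega) (by omega) hjn)
        · refine conj_mem_of_eq n (u := (braidGen n i ^ 2)⁻¹) (b := band n (i+1) j) ?_
            (inv_mem (gen_sq_mem n hi (by omega))) (band_sq_mem n (by omega) (by omega) hjn)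
          rw [← hcC]; (try rw [pow_two]); group
    · -- i < x
      rcases lt_trichotomy (x+1) j with hD | hE | hF
      · -- i < x, x + 2 ≤ j : commute
        have hc : Commute (braidGen n x) (band n i j) :=
          comm_band_mid n hi hilt (by omega) hjn
        exact ⟨conj_mem_of_comm n hc (band_sq_mem n hi hij hjn),
          conj_mem_of_comm n hc.inv_left (band_sq_mem n hi hij hjn)⟩
      · -- x + 1 = j
        have hbs : band n i j = braidGen n x * band n i x * (braidGen n x)⁻¹ := by
          rw [← hE]; exact band_succ n (by omega)
        constructor
        · refine conj_mem_of_eq n (u := braidGen n x ^ 2) (b := band n i x) ?_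
            (gen_sq_mem n hx1 hx2) (band_sq_mem n hi hilt (by omega))
          rw [hbs]; (try rw [pow_two]); group
        · refine conj_mem_of_eq n (u := 1) (b := band n i x) ?_ (one_mem _)
            (band_sq_mem n hi hilt (by omega))
          rw [hbs]; (try rw [pow_two]); group
      · -- j ≤ x
        rcases eq_or_lt_of_le (show j ≤ x by omega) with rfl | hjx
        · -- x = j
          have hbs : band n i (j+1) = braidGen n j * band n i j * (braidGen n j)⁻¹ :=
            band_succ n (by omega)
          constructor
          · exact conj_mem_of_eq n (u := 1) (b := band n i (j+1))
              (by rw [hbs]; (try rw [pow_two]); group) (one_mem _) (band_sq_mem n hi (by omega) (by omega))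
          · refine conj_mem_of_eq n (u := (braidGen n j ^ 2)⁻¹) (b := band n i (j+1)) ?_
              (inv_mem (gen_sq_mem n (by omega) (by omega)))
              (band_sq_mem n hi (by omega) (by omega))
            rw [hbs]; (try rw [pow_two]); group
        · -- j < x
          have hc : Commute (braidGen n x) (band n i j) := comm_band_high n hij (by omega)
          exact ⟨conj_mem_of_comm n hc (band_sq_mem n hi hij hjn),
            conj_mem_of_comm n hc.inv_left (band_sq_mem n hi hij hjn)⟩

lemma conj_gen_mem {x : ℕ} {p : BraidGroup n} (hp : p ∈ Psq n) :
    braidGen n x * p * (braidGen n x)⁻¹ ∈ Psq n ∧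
    (braidGen n x)⁻¹ * p * braidGen n x ∈ Psq n := by
  induction hp using Subgroup.closure_induction with
  | mem y hy =>
    obtain ⟨i, j, hi, hij, hjn, rfl⟩ := hy
    by_cases hx : 1 ≤ x ∧ x + 1 ≤ n
    · exact conj_band_sq n hx.1 hx.2 hi hij hjn
    · have hone : braidGen n x = 1 := gen_out n (by omega)
      rw [hone]
      constructor <;> · simpa using band_sq_mem n hi hij hjn
  | one => constructor <;> · simpa using one_mem (Psq n)
  | mul a b ha hb iha ihb =>
    constructor
    · have : braidGen n x * (a * b) * (braidGen n x)⁻¹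
          = (braidGen n x * a * (braidGen n x)⁻¹) * (braidGen n x * b * (braidGen n x)⁻¹) := by
        group
      rw [this]; exact mul_mem iha.1 ihb.1
    · have : (braidGen n x)⁻¹ * (a * b) * braidGen n x
          = ((braidGen n x)⁻¹ * a * braidGen n x) * ((braidGen n x)⁻¹ * b * braidGen n x) := by
        group
      rw [this]; exact mul_mem iha.2 ihb.2
  | inv a ha iha =>
    constructor
    · have : braidGen n x * a⁻¹ * (braidGen n x)⁻¹
          = (braidGen n x * a * (braidGen n x)⁻¹)⁻¹ := by group
      rw [this]; exact inv_mem iha.1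
    · have : (braidGen n x)⁻¹ * a⁻¹ * braidGen n x
          = ((braidGen n x)⁻¹ * a * braidGen n x)⁻¹ := by group
      rw [this]; exact inv_mem iha.2

lemma Psq_conj {g p : BraidGroup n} (hp : p ∈ Psq n) : g * p * g⁻¹ ∈ Psq n := by
  have htop : ∀ z : BraidGroup n, z ∈ Subgroup.normalizer (Psq n : Set (BraidGroup n)) := by
    intro z
    refine PresentedGroup.generated_by (braidRels n) (Subgroup.normalizer (Psq n : Set (BraidGroup n))) ?_ z
    intro x
    rw [Subgroup.mem_normalizer_iff]
    intro h
    constructor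
    · intro hh; exact (conj_gen_mem n hh).1
    · intro hh
      have : h = (braidGen n x)⁻¹ * (braidGen n x * h * (braidGen n x)⁻¹) * braidGen n x := by
        group
      rw [this]; exact (conj_gen_mem n hh).2
  exact (Subgroup.mem_normalizer_iff.mp (htop g) p).mp hp

end St6

namespace St6
variable (n : ℕ)

/-- the images of the generators in the symmetric group -/
def sigmaPerm (x : ℕ) : Equiv.Perm ℕ :=
  if 1 ≤ x ∧ x + 1 ≤ n then Equiv.swap x (x+1) else 1

lemma swap_braid (i : ℕ) :
    Equiv.swap i (i+1) * Equiv.swap (i+1) (i+2) * Equiv.swap i (i+1)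
      = Equiv.swap (i+1) (i+2) * Equiv.swap i (i+1) * Equiv.swap (i+1) (i+2) := by
  have h1 := Equiv.swap_mul_swap_mul_swap (show (i+2) ≠ (i+1) by omega) (show (i+2) ≠ i by omega)
  have h2 := Equiv.swap_mul_swap_mul_swap (show i ≠ (i+1) by omega) (show i ≠ (i+2) by omega)
  rw [Equiv.swap_comm (i+1) i, Equiv.swap_comm (i+2) (i+1)] at h1
  rw [h1, h2]
  exact Equiv.swap_comm i (i+2)

lemma swap_comm_far {i j : ℕ} (h : i + 2 ≤ j) :
    Equiv.swap i (i+1) * Equiv.swap j (j+1) = Equiv.swap j (j+1) * Equiv.swap i (i+1) := by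
  have h := Equiv.swap_apply_apply (Equiv.swap j (j+1)) i (i+1)
  rw [Equiv.swap_apply_of_ne_of_ne (by omega : i ≠ j) (by omega : i ≠ j + 1),
    Equiv.swap_apply_of_ne_of_ne (by omega : i + 1 ≠ j) (by omega : i + 1 ≠ j + 1)] at h
  calc Equiv.swap i (i+1) * Equiv.swap j (j+1)
      = (Equiv.swap j (j+1) * Equiv.swap i (i+1) * (Equiv.swap j (j+1))⁻¹) *
          Equiv.swap j (j+1) := by rw [← h]
    _ = Equiv.swap j (j+1) * Equiv.swap i (i+1) := by group

lemma rels_check : ∀ r ∈ braidRels n, FreeGroup.lift (sigmaPerm n) r = 1 := by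
  intro r hr
  rcases hr with ⟨i, h1, h2, rfl⟩ | ⟨i, j, h1, h2, h3, rfl⟩ | ⟨i, hi, rfl⟩
  · simp only [map_mul, map_inv, FreeGroup.lift_apply_of]
    rw [mul_inv_eq_one]
    unfold sigmaPerm
    rw [if_pos ⟨h1, by omega⟩, if_pos ⟨by omega, by omega⟩]
    exact swap_braid i
  · simp only [map_mul, map_inv, FreeGroup.lift_apply_of]
    rw [mul_inv_eq_one]
    unfold sigmaPerm
    rw [if_pos ⟨h1, by omega⟩, if_pos ⟨by omega, by omega⟩]
    exact swap_comm_far h2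
  · simp only [FreeGroup.lift_apply_of]
    unfold sigmaPerm
    rw [if_neg (by omega)]

/-- the projection to the symmetric group -/
def piHom : BraidGroup n →* Equiv.Perm ℕ := PresentedGroup.toGroup (rels_check n)

lemma pi_of (x : ℕ) : piHom n (braidGen n x) = sigmaPerm n x :=
  PresentedGroup.toGroup.of (rels_check n)

lemma pi_of_in {x : ℕ} (h1 : 1 ≤ x) (h2 : x + 1 ≤ n) :
    piHom n (braidGen n x) = Equiv.swap x (x+1) := by
  rw [pi_of]; unfold sigmaPerm; rw [if_pos ⟨h1, h2⟩]

lemma pi_band {i j : ℕ} (h1 : 1 ≤ i) (hij : i < j) (hjn : j ≤ n) :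
    piHom n (band n i j) = Equiv.swap i j := by
  induction j, hij using Nat.le_induction with
  | base => rw [band_adj]; exact pi_of_in n h1 hjn
  | succ j hj ih =>
    rw [band_succ n (by omega : i ≤ j), map_mul, map_mul, map_inv,
      pi_of_in n (by omega) hjn, ih (by omega)]
    have := Equiv.swap_apply_apply (Equiv.swap j (j+1)) i j
    rw [Equiv.swap_apply_of_ne_of_ne (by omega : i ≠ j) (by omega : i ≠ j + 1),
      Equiv.swap_apply_left] at this
    exact this.symm

end St6

namespace St6
variable (n : ℕ)

lemma DD_nil {k m : ℕ} (h : m ≤ k) : DD n k m = 1 := by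
  have : m - k = 0 := by omega
  simp [DD, this]

lemma pD_succ {k m : ℕ} (hk1 : 1 ≤ k) (hk : k ≤ m) (hmn : m + 1 ≤ n) :
    piHom n (DD n k (m+1)) = Equiv.swap m (m+1) * piHom n (DD n k m) := by
  rw [DD_succ n hk, map_mul, pi_of_in n (by omega) hmn]

lemma perm_inv_fix {w : Equiv.Perm ℕ} {x : ℕ} (h : w x = x) : w⁻¹ x = x := by
  calc w⁻¹ x = w⁻¹ (w x) := by rw [h]
    _ = x := Equiv.symm_apply_apply w x

lemma pD_out {k m x : ℕ} (hk1 : 1 ≤ k) (hmn : m ≤ n) (hx : x < k ∨ m < x) :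
    piHom n (DD n k m) x = x := by
  rcases le_or_gt k m with hkm | hkm
  · induction m, hkm using Nat.le_induction with
    | base => rw [DD_nil n (le_refl k)]; simp
    | succ m hm ih =>
      rw [pD_succ n hk1 hm hmn, Equiv.Perm.mul_apply, ih (by omega) (by omega)]
      exact Equiv.swap_apply_of_ne_of_ne (by omega) (by omega)
  · rw [DD_nil n (by omega)]; simp

lemma pD_top {k m : ℕ} (hk1 : 1 ≤ k) (hkm : k ≤ m) (hmn : m ≤ n) :
    piHom n (DD n k m) k = m := by
  induction m, hkm using Nat.le_induction with
  | base => rw [DD_nil n (le_refl k)]; simp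
  | succ m hm ih =>
    rw [pD_succ n hk1 hm hmn, Equiv.Perm.mul_apply, ih (by omega)]
    exact Equiv.swap_apply_left m (m+1)

lemma pD_mid {k m j : ℕ} (hk1 : 1 ≤ k) (hj : k < j) (hjm : j ≤ m) (hmn : m ≤ n) :
    piHom n (DD n k m) j = j - 1 := by
  induction m, hjm using Nat.le_induction with
  | base =>
    obtain ⟨jj, rfl⟩ : ∃ jj, j = jj + 1 := ⟨j - 1, by omega⟩
    rw [pD_succ n hk1 (by omega) hmn, Equiv.Perm.mul_apply,
      pD_out n hk1 (by omega) (Or.inr (by omega)), Equiv.swap_apply_right]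
    omega
  | succ m hm ih =>
    rw [pD_succ n hk1 (by omega) hmn, Equiv.Perm.mul_apply, ih (by omega)]
    exact Equiv.swap_apply_of_ne_of_ne (by omega) (by omega)

lemma pD_pop {k m : ℕ} (hk1 : 1 ≤ k) (hkm : k < m) (hmn : m ≤ n) :
    piHom n (DD n k m) = piHom n (DD n (k+1) m) * Equiv.swap k (k+1) := by
  rw [DD_pop n hkm, map_mul, pi_of_in n hk1 (by omega)]

/-- fixes `0` and everything above `m` -/
def FixO (m : ℕ) (w : Equiv.Perm ℕ) : Prop := ∀ x, x = 0 ∨ m < x → w x = x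

lemma FixO_one (m : ℕ) : FixO m 1 := fun x _ => rfl

lemma FixO_k {m : ℕ} {w : Equiv.Perm ℕ} (hw : FixO m w) (hm : 1 ≤ m) :
    1 ≤ w⁻¹ m ∧ w⁻¹ m ≤ m := by
  by_contra hc
  have h1 : w⁻¹ m = 0 ∨ m < w⁻¹ m := by omega
  have h2 : w (w⁻¹ m) = w⁻¹ m := hw _ h1
  rw [show w (w⁻¹ m) = m from w.apply_symm_apply m] at h2
  omega

lemma FixO_step {m' : ℕ} {w : Equiv.Perm ℕ} (hw : FixO (m'+1) w) (hmn : m' + 1 ≤ n) :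
    FixO m' (w * (piHom n (DD n (w⁻¹ (m'+1)) (m'+1)))⁻¹) := by
  set k := w⁻¹ (m'+1) with hk
  obtain ⟨hk1, hk2⟩ := FixO_k hw (by omega)
  intro x hx
  rw [Equiv.Perm.mul_apply]
  rcases hx with rfl | hx
  · rw [perm_inv_fix (pD_out n hk1 hmn (Or.inl (by omega)))]
    exact hw 0 (Or.inl rfl)
  · rcases eq_or_lt_of_le (show m' + 1 ≤ x by omega) with rfl | hx2
    · have htop : piHom n (DD n k (m'+1)) k = m' + 1 := pD_top n hk1 hk2 hmn
      have : (piHom n (DD n k (m'+1)))⁻¹ (m'+1) = k := by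
        rw [Equiv.Perm.inv_eq_iff_eq]
        exact htop.symm
      rw [this, hk, show w (w⁻¹ (m'+1)) = m'+1 from w.apply_symm_apply _]
    · rw [perm_inv_fix (pD_out n hk1 hmn (Or.inr hx2))]
      exact hw x (Or.inr (by omega))

lemma FixO_mul_swap {m i : ℕ} {w : Equiv.Perm ℕ} (hw : FixO m w) (hi : 1 ≤ i)
    (him : i + 1 ≤ m) : FixO m (w * Equiv.swap i (i+1)) := by
  intro x hx
  rw [Equiv.Perm.mul_apply, Equiv.swap_apply_of_ne_of_ne (by omega) (by omega)]
  exact hw x hx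

end St6

namespace St6
variable (n : ℕ)

/-- transversal: canonical braid lift of a permutation supported on `[1,m]` -/
def TT : ℕ → Equiv.Perm ℕ → BraidGroup n
  | 0, _ => 1
  | (m+1), w => TT m (w * (piHom n (DD n (w⁻¹ (m+1)) (m+1)))⁻¹) * DD n (w⁻¹ (m+1)) (m+1)

lemma TT_succ (m : ℕ) (w : Equiv.Perm ℕ) :
    TT n (m+1) w
      = TT n m (w * (piHom n (DD n (w⁻¹ (m+1)) (m+1)))⁻¹) * DD n (w⁻¹ (m+1)) (m+1) := rfl

lemma TT_one : ∀ m : ℕ, TT n m 1 = 1 := by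
  intro m
  induction m with
  | zero => rfl
  | succ m ih =>
    rw [TT_succ]
    have h1 : (1 : Equiv.Perm ℕ)⁻¹ (m+1) = m + 1 := rfl
    rw [h1, DD_self, map_one, inv_one, mul_one, mul_one, ih]

lemma key_lemma (m : ℕ) (hmn : m ≤ n) : ∀ w : Equiv.Perm ℕ, FixO m w →
    ∀ i, 1 ≤ i → i + 1 ≤ m →
    ∃ p ∈ Psq n, TT n m w * braidGen n i = p * TT n m (w * Equiv.swap i (i+1)) := by
  induction m with
  | zero => intro w hw i hi him; omega
  | succ m ih =>
    intro w hw i hi him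
    have hk1 : 1 ≤ w⁻¹ (m+1) := (FixO_k hw (by omega)).1
    have hk2 : w⁻¹ (m+1) ≤ m + 1 := (FixO_k hw (by omega)).2
    set k := w⁻¹ (m+1) with hkdef
    set δ := piHom n (DD n k (m+1)) with hδdef
    set w' := w * δ⁻¹ with hw'def
    have hw' : FixO m w' := FixO_step n hw hmn
    have hvk : (w * Equiv.swap i (i+1))⁻¹ (m+1) = Equiv.swap i (i+1) k := by
      rw [mul_inv_rev, Equiv.swap_inv, Equiv.Perm.mul_apply]
    rcases lt_trichotomy (i+1) k with h1 | h2 | h3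
    · -- case i + 1 < k
      have hswap : Equiv.swap i (i+1) k = k :=
        Equiv.swap_apply_of_ne_of_ne (by omega) (by omega)
      have hδs : Equiv.swap i (i+1) = δ * Equiv.swap i (i+1) * δ⁻¹ := by
        have := Equiv.swap_apply_apply δ i (i+1)
        rwa [hδdef, pD_out n hk1 hmn (Or.inl (by omega)),
          pD_out n hk1 hmn (Or.inl (by omega)), ← hδdef] at this
      have hsδ : Equiv.swap i (i+1) * δ⁻¹ = δ⁻¹ * Equiv.swap i (i+1) := by
        calc Equiv.swap i (i+1) * δ⁻¹ = δ⁻¹ * (δ * Equiv.swap i (i+1) * δ⁻¹) := by group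
          _ = δ⁻¹ * Equiv.swap i (i+1) := by rw [← hδs]
      have hcm : Commute (braidGen n i) (DD n k (m+1)) := comm_DD_low n (by omega)
      obtain ⟨p, hp, hips⟩ := ih (by omega) w' hw' i hi (by omega)
      refine ⟨p, hp, ?_⟩
      rw [TT_succ, TT_succ, hvk, hswap]
      have harg : w * Equiv.swap i (i+1) * (piHom n (DD n k (m+1)))⁻¹
          = w' * Equiv.swap i (i+1) := by
        rw [hw'def, hδdef]
        rw [← hδdef, mul_assoc, hsδ, mul_assoc]
      rw [harg]
      calc TT n m w' * DD n k (m+1) * braidGen n i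
          = TT n m w' * (DD n k (m+1) * braidGen n i) := by group
        _ = TT n m w' * (braidGen n i * DD n k (m+1)) := by rw [← hcm.eq]
        _ = (TT n m w' * braidGen n i) * DD n k (m+1) := by group
        _ = (p * TT n m (w' * Equiv.swap i (i+1))) * DD n k (m+1) := by rw [hips]
        _ = p * (TT n m (w' * Equiv.swap i (i+1)) * DD n k (m+1)) := by group
    · -- case i + 1 = k
      have hswap : Equiv.swap i (i+1) k = i := by rw [← h2, Equiv.swap_apply_right]
      have hDpop : DD n i (m+1) = DD n (i+1) (m+1) * braidGen n i := DD_pop n (by omega)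
      have hpop : piHom n (DD n i (m+1)) = piHom n (DD n (i+1) (m+1)) * Equiv.swap i (i+1) :=
        pD_pop n hi (by omega) hmn
      refine ⟨1, one_mem _, ?_⟩
      rw [TT_succ, TT_succ, hvk, hswap, one_mul, ← hkdef]
      have harg : w * Equiv.swap i (i+1) * (piHom n (DD n i (m+1)))⁻¹ = w' := by
        rw [hpop, hw'def, hδdef, ← h2, mul_inv_rev, Equiv.swap_inv, ← mul_assoc,
          Equiv.mul_swap_mul_self i (i+1)]
      have hfold : w * (piHom n (DD n k (m+1)))⁻¹ = w' := by rw [hw'def, hδdef]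
      rw [harg, hfold, hDpop, h2]
      group
    · -- k ≤ i
      rcases eq_or_lt_of_le (show k ≤ i by omega) with hik | hki
      · -- case i = k
        have hswap : Equiv.swap i (i+1) k = i + 1 := by rw [hik, Equiv.swap_apply_left]
        have hDpop : DD n k (m+1) = DD n (k+1) (m+1) * braidGen n k := DD_pop n (by omega)
        have hpop : piHom n (DD n k (m+1))
            = piHom n (DD n (k+1) (m+1)) * Equiv.swap k (k+1) := pD_pop n hk1 (by omega) hmn
        set X := TT n m w' * DD n (k+1) (m+1) with hX
        refine ⟨X * braidGen n k ^ 2 * X⁻¹,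
          Psq_conj n (gen_sq_mem n (by omega) (by omega)), ?_⟩
        rw [TT_succ, TT_succ, hvk, hswap, ← hkdef, ← hik]
        have harg : w * Equiv.swap k (k+1) * (piHom n (DD n (k+1) (m+1)))⁻¹ = w' := by
          rw [hw'def, hδdef, hpop, mul_inv_rev, Equiv.swap_inv]
          group
        have hfold : w * (piHom n (DD n k (m+1)))⁻¹ = w' := by rw [hw'def, hδdef]
        rw [harg, hfold, hDpop, hX, pow_two]
        group
      · -- case k < i
        obtain ⟨i', rfl⟩ : ∃ i', i = i' + 1 := ⟨i - 1, by omega⟩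
        have hswap : Equiv.swap (i'+1) (i'+1+1) k = k :=
          Equiv.swap_apply_of_ne_of_ne (by omega) (by omega)
        have hjug : DD n k (m+1) * braidGen n (i'+1) = braidGen n i' * DD n k (m+1) :=
          Djuggle n hk1 (by omega) (by omega) (by omega)
        have hδs : δ * Equiv.swap (i'+1) (i'+1+1) * δ⁻¹ = Equiv.swap i' (i'+1) := by
          have := Equiv.swap_apply_apply δ (i'+1) (i'+1+1)
          rw [hδdef, pD_mid n hk1 (by omega) (by omega) hmn,
            pD_mid n hk1 (by omega) (by omega) hmn, ← hδdef] at this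
          simpa using this.symm
        obtain ⟨p, hp, hips⟩ := ih (by omega) w' hw' i' (by omega) (by omega)
        refine ⟨p, hp, ?_⟩
        rw [TT_succ, TT_succ, hvk, hswap]
        have harg : w * Equiv.swap (i'+1) (i'+1+1) * (piHom n (DD n k (m+1)))⁻¹
            = w' * Equiv.swap i' (i'+1) := by
          rw [hw'def, hδdef, ← hδdef]
          calc w * Equiv.swap (i'+1) (i'+1+1) * δ⁻¹
              = w * δ⁻¹ * (δ * Equiv.swap (i'+1) (i'+1+1) * δ⁻¹) := by group
            _ = w * δ⁻¹ * Equiv.swap i' (i'+1) := by rw [hδs]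
        rw [harg]
        calc TT n m w' * DD n k (m+1) * braidGen n (i'+1)
            = TT n m w' * (DD n k (m+1) * braidGen n (i'+1)) := by group
          _ = TT n m w' * (braidGen n i' * DD n k (m+1)) := by rw [hjug]
          _ = (TT n m w' * braidGen n i') * DD n k (m+1) := by group
          _ = (p * TT n m (w' * Equiv.swap i' (i'+1))) * DD n k (m+1) := by rw [hips]
          _ = p * (TT n m (w' * Equiv.swap i' (i'+1)) * DD n k (m+1)) := by group

end St6

namespace St6
variable (n : ℕ)

lemma decomp_list : ∀ l : List (BraidGroup n),
    (∀ y ∈ l, y ∈ Set.range (PresentedGroup.of : ℕ → BraidGroup n) ∪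
      (Set.range (PresentedGroup.of : ℕ → BraidGroup n))⁻¹) →
    ∃ p ∈ Psq n, FixO n (piHom n l.prod) ∧ l.prod = p * TT n n (piHom n l.prod) := by
  intro l
  induction l using List.reverseRecOn with
  | nil =>
    intro _
    refine ⟨1, one_mem _, ?_, ?_⟩
    · simp only [List.prod_nil, map_one]
      exact FixO_one n
    · simp [TT_one]
  | append_singleton l y ih =>
    intro hl
    obtain ⟨p, hp, hfix, heq⟩ := ih (fun z hz => hl z (by simp [hz]))
    have hy := hl y (by simp)
    rw [List.prod_append, List.prod_singleton]
    rcases hy with ⟨x, rfl⟩ | hyinv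
    · -- y = braidGen n x
      show ∃ p ∈ Psq n, FixO n (piHom n (l.prod * braidGen n x)) ∧
        l.prod * braidGen n x = p * TT n n (piHom n (l.prod * braidGen n x))
      by_cases hx : 1 ≤ x ∧ x + 1 ≤ n
      · obtain ⟨q, hq, hTT⟩ := key_lemma n n (le_refl n) _ hfix x hx.1 hx.2
        have hpi : piHom n (l.prod * braidGen n x)
            = piHom n l.prod * Equiv.swap x (x+1) := by
          rw [map_mul, pi_of_in n hx.1 hx.2]
        refine ⟨p * q, mul_mem hp hq, ?_, ?_⟩
        · rw [hpi]; exact FixO_mul_swap hfix hx.1 hx.2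
        · rw [hpi]
          calc l.prod * braidGen n x = p * (TT n n (piHom n l.prod) * braidGen n x) := by
                conv_lhs => rw [heq]
                group
            _ = p * (q * TT n n (piHom n l.prod * Equiv.swap x (x+1))) := by rw [hTT]
            _ = p * q * TT n n (piHom n l.prod * Equiv.swap x (x+1)) := by group
      · have hone : braidGen n x = 1 := gen_out n (by omega)
        rw [hone, mul_one]
        exact ⟨p, hp, hfix, heq⟩
    · -- y = (braidGen n x)⁻¹
      obtain ⟨x, hxy⟩ := hyinv
      have hyx : y = (braidGen n x)⁻¹ := by
        show y = (PresentedGroup.of x : BraidGroup n)⁻¹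
        rw [hxy, inv_inv]
      subst hyx
      by_cases hx : 1 ≤ x ∧ x + 1 ≤ n
      · obtain ⟨q, hq, hTT⟩ := key_lemma n n (le_refl n) _ hfix x hx.1 hx.2
        have hpi : piHom n (l.prod * (braidGen n x)⁻¹)
            = piHom n l.prod * Equiv.swap x (x+1) := by
          rw [map_mul, map_inv, pi_of_in n hx.1 hx.2, Equiv.swap_inv]
        set r := TT n n (piHom n l.prod) * (braidGen n x ^ 2)⁻¹ *
          (TT n n (piHom n l.prod))⁻¹ with hr
        have hrmem : r ∈ Psq n := Psq_conj n (inv_mem (gen_sq_mem n hx.1 hx.2))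
        refine ⟨p * r * q, mul_mem (mul_mem hp hrmem) hq, ?_, ?_⟩
        · rw [hpi]; exact FixO_mul_swap hfix hx.1 hx.2
        · rw [hpi]
          calc l.prod * (braidGen n x)⁻¹
              = p * (TT n n (piHom n l.prod) * (braidGen n x)⁻¹) := by
                conv_lhs => rw [heq]
                group
            _ = p * (r * (TT n n (piHom n l.prod) * braidGen n x)) := by
                rw [hr, pow_two]; group
            _ = p * (r * (q * TT n n (piHom n l.prod * Equiv.swap x (x+1)))) := by rw [hTT]
            _ = p * r * q * TT n n (piHom n l.prod * Equiv.swap x (x+1)) := by group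
      · have hone : braidGen n x = 1 := gen_out n (by omega)
        rw [hone, inv_one, mul_one]
        exact ⟨p, hp, hfix, heq⟩

lemma decomp (g : BraidGroup n) :
    ∃ p ∈ Psq n, g = p * TT n n (piHom n g) := by
  have hg : g ∈ Subgroup.closure (Set.range (PresentedGroup.of : ℕ → BraidGroup n)) := by
    rw [PresentedGroup.closure_range_of]; trivial
  have hg' : g ∈ Submonoid.closure (Set.range (PresentedGroup.of : ℕ → BraidGroup n) ∪
      (Set.range (PresentedGroup.of : ℕ → BraidGroup n))⁻¹) := by
    rw [← Subgroup.closure_toSubmonoid]; exact hg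
  obtain ⟨l, hl, rfl⟩ := Submonoid.exists_list_of_mem_closure hg'
  obtain ⟨p, hp, _, heq⟩ := decomp_list n l hl
  exact ⟨p, hp, heq⟩

end St6

namespace St6
variable (n : ℕ)

lemma Psq_le_band (m : ℕ → ℕ → ℕ)
    (hval : ∀ i j, 1 ≤ i → i ≤ n → 1 ≤ j → j ≤ n → i ≠ j → m i j = 1 ∨ m i j = 2) :
    Psq n ≤ bandSubgroup n m := by
  rw [Psq, Subgroup.closure_le]
  rintro x ⟨i, j, hi, hij, hjn, rfl⟩
  rcases hval i j hi (by omega) (by omega) hjn (by omega) with h1 | h2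
  · have hb : band n i j ∈ bandSubgroup n m := by
      have : band n i j = band n i j ^ m i j := by rw [h1, pow_one]
      rw [this]
      exact Subgroup.subset_closure ⟨i, j, hi, hij, hjn, rfl⟩
    exact pow_mem hb 2
  · have : band n i j ^ 2 = band n i j ^ m i j := by rw [h2]
    rw [this]
    exact Subgroup.subset_closure ⟨i, j, hi, hij, hjn, rfl⟩

lemma ker_le (m : ℕ → ℕ → ℕ)
    (hval : ∀ i j, 1 ≤ i → i ≤ n → 1 ≤ j → j ≤ n → i ≠ j → m i j = 1 ∨ m i j = 2) :
    (piHom n).ker ≤ bandSubgroup n m := by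
  intro g hg
  obtain ⟨p, hp, heq⟩ := decomp n g
  rw [MonoidHom.mem_ker] at hg
  rw [heq, hg, TT_one, mul_one]
  exact Psq_le_band n m hval hp

lemma map_eq (m : ℕ → ℕ → ℕ) (hsym : ∀ i j, m i j = m j i)
    (hval : ∀ i j, 1 ≤ i → i ≤ n → 1 ≤ j → j ≤ n → i ≠ j → m i j = 1 ∨ m i j = 2) :
    Subgroup.map (piHom n) (bandSubgroup n m) =
      Subgroup.closure
        {e | ∃ i j, 1 ≤ i ∧ i ≤ n ∧ 1 ≤ j ∧ j ≤ n ∧ (i = j ∨ m i j = 1) ∧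
          e = Equiv.swap i j} := by
  rw [bandSubgroup, MonoidHom.map_closure]
  apply le_antisymm
  · rw [Subgroup.closure_le]
    rintro y ⟨x, ⟨i, j, hi, hij, hjn, rfl⟩, rfl⟩
    rcases hval i j hi (by omega) (by omega) hjn (by omega) with h1 | h2
    · apply Subgroup.subset_closure
      refine ⟨i, j, hi, by omega, by omega, hjn, Or.inr h1, ?_⟩
      rw [h1, pow_one, pi_band n hi hij hjn]
    · have : piHom n (band n i j ^ m i j) = 1 := by
        rw [h2, map_pow, pi_band n hi hij hjn, pow_two, Equiv.swap_mul_self]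
      rw [this]
      exact one_mem _
  · rw [Subgroup.closure_le]
    rintro e ⟨i, j, hi, hin, hj, hjn, hm, rfl⟩
    rcases eq_or_ne i j with rfl | hij
    · rw [Equiv.swap_self]
      exact one_mem _
    · have hm1 : m i j = 1 := hm.resolve_left hij
      rcases Nat.lt_or_ge i j with hlt | hge
      · apply Subgroup.subset_closure
        refine ⟨band n i j ^ m i j, ⟨i, j, hi, hlt, hjn, rfl⟩, ?_⟩
        rw [hm1, pow_one, pi_band n hi hlt hjn]
      · have hlt : j < i := by omega
        apply Subgroup.subset_closure
        refine ⟨band n j i ^ m j i, ⟨j, i, hj, hlt, hin, rfl⟩, ?_⟩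
        rw [← hsym i j, hm1, pow_one, pi_band n hj hlt hin, Equiv.swap_comm]

end St6


theorem stmt6 (n : ℕ) (m : ℕ → ℕ → ℕ)
    (hsym : ∀ i j, m i j = m j i)
    (hval : ∀ i j, 1 ≤ i → i ≤ n → 1 ≤ j → j ≤ n → i ≠ j → m i j = 1 ∨ m i j = 2)
    (htrans : ∀ i j k, 1 ≤ i → i ≤ n → 1 ≤ j → j ≤ n → 1 ≤ k → k ≤ n →
      i ≠ j → j ≠ k → i ≠ k → m i j = 1 → m j k = 1 → m i k = 1) :
    -- `S_{n,P}`: the subgroup of the symmetric group generated by the transpositions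
    -- `(i j)` with `i ∼ j` (acting on `{1,…,n} ⊆ ℕ`)
    letI SnP : Subgroup (Equiv.Perm ℕ) :=
      Subgroup.closure
        {e | ∃ i j, 1 ≤ i ∧ i ≤ n ∧ 1 ≤ j ∧ j ≤ n ∧ (i = j ∨ m i j = 1) ∧ e = Equiv.swap i j}
    -- `π : Br_n → S_n`, `σ_i ↦ (i, i+1)`; its kernel is the pure braid group `PBr_n`,
    -- and `1 → PBr_n → E_M → S_{n,P} → 1` is exact
    ∃ π : BraidGroup n →* Equiv.Perm ℕ,
      (∀ i, 1 ≤ i → i + 1 ≤ n → π (braidGen n i) = Equiv.swap i (i + 1)) ∧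
      π.ker ≤ bandSubgroup n m ∧
      Subgroup.map π (bandSubgroup n m) = SnP := by
  exact ⟨St6.piHom n, fun i h1 h2 => St6.pi_of_in n h1 h2, St6.ker_le n m hval,
    St6.map_eq n m hsym hval⟩
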